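/- The Moyal-type star product on polynomial functions of Y^A = (y^α, ỹ^{α̇}), defined by f ⋆ g = exp(⟨y ∂₁⟩ + ⟨y ∂₂⟩ + Λ⟨∂₁ ∂₂⟩ + [y ∂₁] + [y ∂₂] + [∂₁ ∂₂]) f(Y₁) g(Y₂)|_{Y₁=Y₂=0}, is associative: (f ⋆ g) ⋆ h = f ⋆ (g ⋆ h) for all polynomials f, g, h. -/

import Mathlib

open MvPolynomial

noncomputable section

/-- The antisymmetric ε-symbol with ε^{01} = 1. -/
def eps : Fin 2 → Fin 2 → ℂ := ![![0, 1], ![-1, 0]]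

/-- Spinor variables Y^A = (y^α, ỹ^{α̇}): undotted ⊕ dotted. -/
abbrev Idx := Fin 2 ⊕ Fin 2

/-- Variables for the star-product computation: slot 0 is the output Y,
slots 1 and 2 are the auxiliary Y₁, Y₂. -/
abbrev V3 := Fin 3 × Idx

/-- ⟨y ∂ᵢ⟩ = y^α ∂/∂yᵢ^α. -/
def angY (i : Fin 3) (p : MvPolynomial V3 ℂ) : MvPolynomial V3 ℂ :=
  ∑ a : Fin 2, X ((0 : Fin 3), Sum.inl a) * pderiv (i, Sum.inl a) p

/-- [y ∂ᵢ] = ỹ^{α̇} ∂/∂ỹᵢ^{α̇}. -/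
def sqY (i : Fin 3) (p : MvPolynomial V3 ℂ) : MvPolynomial V3 ℂ :=
  ∑ a : Fin 2, X ((0 : Fin 3), Sum.inr a) * pderiv (i, Sum.inr a) p

/-- ⟨∂ᵢ ∂ⱼ⟩ = ∂ᵢ^α ∂_{jα} (ε-contraction of undotted derivatives). -/
def angDD (i j : Fin 3) (p : MvPolynomial V3 ℂ) : MvPolynomial V3 ℂ :=
  ∑ a : Fin 2, ∑ b : Fin 2, eps a b • pderiv (i, Sum.inl b) (pderiv (j, Sum.inl a) p)

/-- [∂ᵢ ∂ⱼ] = ∂̃ᵢ^{α̇} ∂̃_{jα̇} (ε-contraction of dotted derivatives). -/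
def sqDD (i j : Fin 3) (p : MvPolynomial V3 ℂ) : MvPolynomial V3 ℂ :=
  ∑ a : Fin 2, ∑ b : Fin 2, eps a b • pderiv (i, Sum.inr b) (pderiv (j, Sum.inr a) p)

/-- The bidifferential operator ⟨y∂₁⟩ + ⟨y∂₂⟩ + Λ⟨∂₁∂₂⟩ + [y∂₁] + [y∂₂] + [∂₁∂₂]. -/
def starOp (Λ : ℂ) (p : MvPolynomial V3 ℂ) : MvPolynomial V3 ℂ :=
  angY 1 p + angY 2 p + Λ • angDD 1 2 p + sqY 1 p + sqY 2 p + sqDD 1 2 p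

/-- Exponential of a (locally nilpotent) operator applied to a polynomial; since each
application of `starOp` strictly lowers the degree in the auxiliary variables, the
series truncates at the total degree. -/
def expApply (D : MvPolynomial V3 ℂ → MvPolynomial V3 ℂ) (p : MvPolynomial V3 ℂ) :
    MvPolynomial V3 ℂ :=
  ∑ k ∈ Finset.range (p.totalDegree + 1), ((k.factorial : ℂ))⁻¹ • D^[k] p

/-- Place a polynomial f(Y) into the auxiliary slot i, i.e. f(Yᵢ). -/
def emb (i : Fin 3) (f : MvPolynomial Idx ℂ) : MvPolynomial V3 ℂ :=
  rename (fun v => (i, v)) f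

/-- Set the auxiliary variables Y₁ = Y₂ = 0, keeping the output variables Y. -/
def setAux (p : MvPolynomial V3 ℂ) : MvPolynomial Idx ℂ :=
  aeval (fun v : V3 => if v.1 = 0 then X v.2 else 0) p

/-- The Moyal-type star product
f ⋆ g = exp(⟨y∂₁⟩+⟨y∂₂⟩+Λ⟨∂₁∂₂⟩+[y∂₁]+[y∂₂]+[∂₁∂₂]) f(Y₁) g(Y₂)|_{Y₁=Y₂=0}. -/
def starP (Λ : ℂ) (f g : MvPolynomial Idx ℂ) : MvPolynomial Idx ℂ :=
  setAux (expApply (starOp Λ) (emb 1 f * emb 2 g))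


namespace StarAssoc

set_option linter.unusedSectionVars false



variable {σ : Type*} [DecidableEq σ]

/-- weighted degree of a monomial -/
def wdeg (w : σ → ℕ) (m : σ →₀ ℕ) : ℕ := m.sum fun v k => w v * k

lemma wdeg_zero (w : σ → ℕ) : wdeg w 0 = 0 := Finsupp.sum_zero_index

lemma wdeg_add (w : σ → ℕ) (m m' : σ →₀ ℕ) : wdeg w (m + m') = wdeg w m + wdeg w m' :=
  Finsupp.sum_add_index (by intros; simp) (by intros; ring)

lemma wdeg_single (w : σ → ℕ) (v : σ) (k : ℕ) : wdeg w (Finsupp.single v k) = w v * k :=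
  Finsupp.sum_single_index (by simp)

/-- weighted degree bound for a polynomial -/
def WLe (w : σ → ℕ) (n : ℕ) (p : MvPolynomial σ ℂ) : Prop :=
  ∀ m ∈ p.support, wdeg w m ≤ n

lemma WLe_zero (w : σ → ℕ) (n : ℕ) : WLe w n (0 : MvPolynomial σ ℂ) := by
  intro m hm; simp at hm

lemma WLe_mono {w : σ → ℕ} {n n' : ℕ} (h : n ≤ n') {p : MvPolynomial σ ℂ}
    (hp : WLe w n p) : WLe w n' p := fun m hm => (hp m hm).trans h

lemma WLe_weight_mono {w w' : σ → ℕ} (hw : ∀ v, w v ≤ w' v) {n : ℕ} {p : MvPolynomial σ ℂ}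
    (hp : WLe w' n p) : WLe w n p := by
  intro m hm
  refine le_trans ?_ (hp m hm)
  exact Finset.sum_le_sum fun v _ => Nat.mul_le_mul_right _ (hw v)

lemma WLe_add {w : σ → ℕ} {n : ℕ} {p q : MvPolynomial σ ℂ} (hp : WLe w n p) (hq : WLe w n q) :
    WLe w n (p + q) := by
  intro m hm
  rcases Finset.mem_union.1 (MvPolynomial.support_add hm) with h | h
  · exact hp m h
  · exact hq m h

lemma WLe_sum {w : σ → ℕ} {n : ℕ} {ι : Type*} (s : Finset ι) (F : ι → MvPolynomial σ ℂ)
    (h : ∀ i ∈ s, WLe w n (F i)) : WLe w n (∑ i ∈ s, F i) := by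
  classical
  induction s using Finset.induction_on with
  | empty => simpa using WLe_zero w n
  | insert _ _ hx ih =>
      rw [Finset.sum_insert hx]
      exact WLe_add (h _ (Finset.mem_insert_self _ _))
        (ih fun i hi => h i (Finset.mem_insert_of_mem hi))

lemma WLe_smul {w : σ → ℕ} {n : ℕ} (c : ℂ) {p : MvPolynomial σ ℂ} (hp : WLe w n p) :
    WLe w n (c • p) := by
  intro m hm
  apply hp
  exact Finsupp.support_smul hm

lemma WLe_monomial {w : σ → ℕ} {n : ℕ} {m : σ →₀ ℕ} (a : ℂ) (h : wdeg w m ≤ n) :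
    WLe w n (monomial m a) := by
  intro m' hm'
  rcases Finset.mem_singleton.1 (MvPolynomial.support_monomial_subset hm') with rfl
  exact h

lemma WLe_C {w : σ → ℕ} {n : ℕ} (a : ℂ) : WLe w n (C a : MvPolynomial σ ℂ) := by
  rw [MvPolynomial.C_apply]
  exact WLe_monomial a (by simp [wdeg_zero])

lemma WLe_X {w : σ → ℕ} {n : ℕ} {v : σ} (h : w v ≤ n) : WLe w n (X v : MvPolynomial σ ℂ) := by
  rw [MvPolynomial.X, ]
  exact WLe_monomial 1 (by simpa [wdeg_single] using h)

lemma WLe_mul {w : σ → ℕ} {n n' : ℕ} {p q : MvPolynomial σ ℂ}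
    (hp : WLe w n p) (hq : WLe w n' q) : WLe w (n + n') (p * q) := by
  intro m hm
  have := MvPolynomial.support_mul p q hm
  rcases Finset.mem_add.1 this with ⟨m1, hm1, m2, hm2, rfl⟩
  rw [wdeg_add]
  exact Nat.add_le_add (hp m1 hm1) (hq m2 hm2)

lemma WLe_pderiv_le {w : σ → ℕ} {n : ℕ} {p : MvPolynomial σ ℂ} (hp : WLe w n p) (v : σ) :
    WLe w n (pderiv v p) := by
  have hrw : pderiv v p = ∑ m ∈ p.support, pderiv v (monomial m (coeff m p)) := by
    conv_lhs => rw [p.as_sum]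
    rw [map_sum]
  rw [hrw]
  refine WLe_sum _ _ fun m hm => ?_
  rw [pderiv_monomial]
  by_cases h : m v = 0
  · simp [h, WLe_zero]
  · refine WLe_monomial _ ?_
    have hle : Finsupp.single v 1 ≤ m := by
      rw [Finsupp.single_le_iff]; omega
    have : (m - Finsupp.single v 1) + Finsupp.single v 1 = m := tsub_add_cancel_of_le hle
    have h2 : wdeg w (m - Finsupp.single v 1) + w v * 1 = wdeg w m := by
      rw [← wdeg_single w v 1, ← wdeg_add, this]
    have := hp m hm
    omega

lemma WLe_pderiv {w : σ → ℕ} {n : ℕ} {p : MvPolynomial σ ℂ} {v : σ} (hv : w v = 1)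
    (hp : WLe w (n + 1) p) : WLe w n (pderiv v p) := by
  have hrw : pderiv v p = ∑ m ∈ p.support, pderiv v (monomial m (coeff m p)) := by
    conv_lhs => rw [p.as_sum]
    rw [map_sum]
  rw [hrw]
  refine WLe_sum _ _ fun m hm => ?_
  rw [pderiv_monomial]
  by_cases h : m v = 0
  · simp [h, WLe_zero]
  · refine WLe_monomial _ ?_
    have hle : Finsupp.single v 1 ≤ m := by
      rw [Finsupp.single_le_iff]; omega
    have heq : (m - Finsupp.single v 1) + Finsupp.single v 1 = m := tsub_add_cancel_of_le hle
    have h2 : wdeg w (m - Finsupp.single v 1) + w v * 1 = wdeg w m := by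
      rw [← wdeg_single w v 1, ← wdeg_add, heq]
    have := hp m hm
    omega

lemma pderiv_eq_zero_of_WLe {w : σ → ℕ} {p : MvPolynomial σ ℂ} {v : σ} (hv : w v = 1)
    (hp : WLe w 0 p) : pderiv v p = 0 := by
  have hrw : pderiv v p = ∑ m ∈ p.support, pderiv v (monomial m (coeff m p)) := by
    conv_lhs => rw [p.as_sum]
    rw [map_sum]
  rw [hrw]
  refine Finset.sum_eq_zero fun m hm => ?_
  rw [pderiv_monomial]
  by_cases h : m v = 0
  · simp [h]
  · exfalso
    have h0 := hp m hm
    have hle : Finsupp.single v 1 ≤ m := by rw [Finsupp.single_le_iff]; omega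
    have heq : (m - Finsupp.single v 1) + Finsupp.single v 1 = m := tsub_add_cancel_of_le hle
    have h2 : wdeg w (m - Finsupp.single v 1) + w v * 1 = wdeg w m := by
      rw [← wdeg_single w v 1, ← wdeg_add, heq]
    omega

lemma wdeg_mapDomain {τ : Type*} [DecidableEq τ] (w : τ → ℕ) (f : σ → τ) (m : σ →₀ ℕ) :
    wdeg w (Finsupp.mapDomain f m) = m.sum fun v k => w (f v) * k := by
  unfold wdeg
  rw [Finsupp.sum_mapDomain_index (by simp) (by intros; ring)]

lemma WLe_rename {τ : Type*} [DecidableEq τ] {w : σ → ℕ} {w' : τ → ℕ} (f : σ → τ)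
    (hw : ∀ v, w' (f v) ≤ w v) {n : ℕ} {p : MvPolynomial σ ℂ} (hp : WLe w n p) :
    WLe w' n (rename f p) := by
  have hrw : rename f p = ∑ m ∈ p.support, rename f (monomial m (coeff m p)) := by
    conv_lhs => rw [p.as_sum]
    rw [map_sum]
  rw [hrw]
  refine WLe_sum _ _ fun m hm => ?_
  rw [rename_monomial]
  refine WLe_monomial _ ?_
  rw [wdeg_mapDomain]
  refine le_trans ?_ (hp m hm)
  exact Finset.sum_le_sum fun v _ => Nat.mul_le_mul_right _ (hw v)

lemma WLe_one_totalDegree (p : MvPolynomial σ ℂ) : WLe (fun _ => 1) p.totalDegree p := by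
  intro m hm
  have : wdeg (fun _ => 1) m = m.sum fun _ k => k := by
    unfold wdeg; congr 1; funext v k; ring
  rw [this]
  exact Finset.le_sup (f := fun m => m.sum fun _ e => e) hm

lemma totalDegree_le_of_WLe_one {n : ℕ} {p : MvPolynomial σ ℂ} (hp : WLe (fun _ => 1) n p) :
    p.totalDegree ≤ n := by
  refine Finset.sup_le fun m hm => ?_
  have := hp m hm
  have h2 : wdeg (fun _ => 1) m = m.sum fun _ k => k := by
    unfold wdeg; congr 1; funext v k; ring
  omega

lemma rename_congr_of_WLe {τ : Type*} [DecidableEq τ] {w : σ → ℕ} {p : MvPolynomial σ ℂ}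
    (hp : WLe w 0 p) {f g : σ → τ} (hfg : ∀ v, w v = 0 → f v = g v) :
    rename f p = rename g p := by
  conv_lhs => rw [p.as_sum]
  conv_rhs => rw [p.as_sum]
  rw [map_sum, map_sum]
  refine Finset.sum_congr rfl fun m hm => ?_
  rw [rename_monomial, rename_monomial]
  have hmd : Finsupp.mapDomain f m = Finsupp.mapDomain g m := by
    refine Finsupp.mapDomain_congr fun v hv => ?_
    refine hfg v ?_
    have h0 := hp m hm
    have : w v * m v = 0 := by
      have : w v * m v ≤ wdeg w m := by
        unfold wdeg
        rw [Finsupp.sum]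
        exact Finset.single_le_sum (f := fun v => w v * m v) (fun _ _ => Nat.zero_le _) hv
      omega
    have hmv : m v ≠ 0 := Finsupp.mem_support_iff.1 hv
    rcases Nat.mul_eq_zero.1 this with h | h
    · exact h
    · exact absurd h hmv
  rw [hmd]



variable {M : Type*} [AddCommGroup M] [Module ℂ M]

/-- truncated exponential of an operator -/
def Sexp (N : ℕ) (A : Module.End ℂ M) : Module.End ℂ M :=
  ∑ k ∈ Finset.range N, (k.factorial : ℂ)⁻¹ • A ^ k

lemma Sexp_apply (N : ℕ) (A : Module.End ℂ M) (p : M) :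
    Sexp N A p = ∑ k ∈ Finset.range N, (k.factorial : ℂ)⁻¹ • (A ^ k) p := by
  simp [Sexp, LinearMap.sum_apply]

lemma Sexp_trunc {N₀ N : ℕ} (A : Module.End ℂ M) (p : M)
    (hv : ∀ k, N₀ ≤ k → (A ^ k) p = 0) (hN : N₀ ≤ N) :
    Sexp N A p = Sexp N₀ A p := by
  rw [Sexp_apply, Sexp_apply]
  refine (Finset.sum_subset (Finset.range_subset_range.2 hN) fun k _ hk => ?_).symm
  rw [hv k (by simpa using hk), smul_zero]

lemma factorial_coeff {k m : ℕ} (h : m ≤ k) :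
    ((k.factorial : ℂ))⁻¹ * (k.choose m : ℂ) =
      ((m.factorial : ℂ))⁻¹ * (((k - m).factorial : ℂ))⁻¹ := by
  have key : (k.choose m) * m.factorial * (k - m).factorial = k.factorial :=
    Nat.choose_mul_factorial_mul_factorial h
  have h1 : ((k.factorial : ℂ)) ≠ 0 := Nat.cast_ne_zero.2 k.factorial_ne_zero
  have h2 : ((m.factorial : ℂ)) ≠ 0 := Nat.cast_ne_zero.2 m.factorial_ne_zero
  have h3 : (((k - m).factorial : ℂ)) ≠ 0 := Nat.cast_ne_zero.2 (k - m).factorial_ne_zero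
  have key' : ((k.choose m : ℂ)) * (m.factorial : ℂ) * ((k - m).factorial : ℂ)
      = (k.factorial : ℂ) := by exact_mod_cast congrArg (Nat.cast : ℕ → ℂ) key
  field_simp
  linear_combination key'

lemma Sexp_add_apply {A B : Module.End ℂ M} (h : Commute A B) (N : ℕ) (p : M)
    (hv : ∀ i j, N ≤ i + j → (A ^ i) ((B ^ j) p) = 0) :
    Sexp N (A + B) p = Sexp N A (Sexp N B p) := by
  have hRHS : Sexp N A (Sexp N B p)
      = ∑ q ∈ Finset.range N ×ˢ Finset.range N,
          (((q.1.factorial : ℂ))⁻¹ * ((q.2.factorial : ℂ))⁻¹) • (A ^ q.1) ((B ^ q.2) p) := by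
    rw [Finset.sum_product]
    rw [Sexp_apply]
    refine Finset.sum_congr rfl fun i _ => ?_
    rw [Sexp_apply, map_sum]
    rw [Finset.smul_sum]
    refine Finset.sum_congr rfl fun j _ => ?_
    rw [LinearMap.map_smul, smul_smul]
  have hLHS : Sexp N (A + B) p
      = ∑ x ∈ (Finset.range N).sigma (fun k => Finset.range (k + 1)),
          (((x.2.factorial : ℂ))⁻¹ * (((x.1 - x.2).factorial : ℂ))⁻¹)
            • (A ^ x.2) ((B ^ (x.1 - x.2)) p) := by
    rw [Sexp_apply, Finset.sum_sigma]
    refine Finset.sum_congr rfl fun k _ => ?_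
    rw [Commute.add_pow h k]
    rw [LinearMap.sum_apply, Finset.smul_sum]
    refine Finset.sum_congr rfl fun m hm => ?_
    have hm' : m ≤ k := by simpa [Nat.lt_succ_iff] using hm
    have : ((A ^ m * B ^ (k - m) * (k.choose m : Module.End ℂ M))) p
        = (k.choose m : ℂ) • (A ^ m) ((B ^ (k - m)) p) := by
      rw [Module.End.mul_apply, Module.End.mul_apply]
      have : ((k.choose m : ℕ) : Module.End ℂ M) p = (k.choose m : ℂ) • p := by
        simp [Module.End.natCast_apply, Nat.cast_smul_eq_nsmul]
      rw [this, LinearMap.map_smul, LinearMap.map_smul]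
    rw [this, smul_smul, factorial_coeff hm']
  rw [hLHS, hRHS]
  rw [← Finset.sum_filter_add_sum_filter_not (Finset.range N ×ˢ Finset.range N)
    (fun q => q.1 + q.2 < N)]
  have hzero : ∑ q ∈ (Finset.range N ×ˢ Finset.range N).filter (fun q => ¬ q.1 + q.2 < N),
      (((q.1.factorial : ℂ))⁻¹ * ((q.2.factorial : ℂ))⁻¹) • (A ^ q.1) ((B ^ q.2) p) = 0 := by
    refine Finset.sum_eq_zero fun q hq => ?_
    have := (Finset.mem_filter.1 hq).2
    rw [hv q.1 q.2 (by omega), smul_zero]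
  rw [hzero, add_zero]

  refine Finset.sum_nbij' (fun x => (x.2, x.1 - x.2)) (fun q => ⟨q.1 + q.2, q.1⟩) ?_ ?_ ?_ ?_ ?_
  · rintro ⟨k, m⟩ hx
    simp only [Finset.mem_sigma, Finset.mem_range, Nat.lt_succ_iff] at hx
    simp only [Finset.mem_filter, Finset.mem_product, Finset.mem_range]
    omega
  · rintro ⟨i, j⟩ hq
    simp only [Finset.mem_filter, Finset.mem_product, Finset.mem_range] at hq
    simp only [Finset.mem_sigma, Finset.mem_range, Nat.lt_succ_iff]
    omega
  · rintro ⟨k, m⟩ hx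
    simp only [Finset.mem_sigma, Finset.mem_range, Nat.lt_succ_iff] at hx
    simp only [Sigma.mk.inj_iff]
    constructor
    · omega
    · exact heq_of_eq (by omega)
  · rintro ⟨i, j⟩ hq
    show (i, i + j - i) = (i, j)
    congr 1
    omega
  · rintro ⟨k, m⟩ _
    rfl


section Reduces
variable {σ : Type*} [DecidableEq σ]

/-- an operator that strictly decreases the `w`-weighted degree -/
def Reduces (w : σ → ℕ) (A : Module.End ℂ (MvPolynomial σ ℂ)) : Prop :=
  (∀ n p, WLe w (n + 1) p → WLe w n (A p)) ∧ (∀ p, WLe w 0 p → A p = 0)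

/-- an operator that does not increase the `w`-weighted degree -/
def Keeps (w : σ → ℕ) (A : Module.End ℂ (MvPolynomial σ ℂ)) : Prop :=
  ∀ n p, WLe w n p → WLe w n (A p)

lemma Reduces.add {w : σ → ℕ} {A B : Module.End ℂ (MvPolynomial σ ℂ)}
    (hA : Reduces w A) (hB : Reduces w B) : Reduces w (A + B) := by
  constructor
  · intro n p hp
    exact WLe_add (hA.1 n p hp) (hB.1 n p hp)
  · intro p hp
    simp [LinearMap.add_apply, hA.2 p hp, hB.2 p hp]

lemma Reduces.smul {w : σ → ℕ} {A : Module.End ℂ (MvPolynomial σ ℂ)} (c : ℂ)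
    (hA : Reduces w A) : Reduces w (c • A) := by
  constructor
  · intro n p hp
    exact WLe_smul c (hA.1 n p hp)
  · intro p hp
    simp [LinearMap.smul_apply, hA.2 p hp]

lemma Reduces.sum {w : σ → ℕ} {ι : Type*} (s : Finset ι)
    (F : ι → Module.End ℂ (MvPolynomial σ ℂ)) (h : ∀ i ∈ s, Reduces w (F i)) :
    Reduces w (∑ i ∈ s, F i) := by
  classical
  induction s using Finset.induction_on with
  | empty =>
      constructor
      · intro n p hp
        simpa using WLe_zero w n
      · intro p hp; simp
  | insert _ _ hx ih =>
      rw [Finset.sum_insert hx]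
      exact Reduces.add (h _ (Finset.mem_insert_self _ _))
        (ih fun i hi => h i (Finset.mem_insert_of_mem hi))

lemma Reduces.pow_zero {w : σ → ℕ} {A : Module.End ℂ (MvPolynomial σ ℂ)} (hA : Reduces w A) :
    ∀ (k n : ℕ) (p : MvPolynomial σ ℂ), WLe w n p → n < k → (A ^ k) p = 0 := by
  intro k
  induction k with
  | zero => intro n p _ h; omega
  | succ m ih =>
      intro n p hp hn
      rw [pow_succ, Module.End.mul_apply]
      cases n with
      | zero => rw [hA.2 p hp, map_zero]
      | succ n' => exact ih n' (A p) (hA.1 n' p hp) (by omega)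

lemma Reduces.pow_WLe {w : σ → ℕ} {A : Module.End ℂ (MvPolynomial σ ℂ)} (hA : Reduces w A) :
    ∀ (k n : ℕ) (p : MvPolynomial σ ℂ), WLe w n p → WLe w (n - k) ((A ^ k) p) := by
  intro k
  induction k with
  | zero => intro n p hp; simpa using WLe_mono (by omega) hp
  | succ m ih =>
      intro n p hp
      rw [pow_succ, Module.End.mul_apply]
      cases n with
      | zero =>
          rw [hA.2 p hp]
          simpa using WLe_zero w _
      | succ n' =>
          have := ih n' (A p) (hA.1 n' p hp)
          exact WLe_mono (by omega) this

lemma Reduces.mixed_zero {w : σ → ℕ} {A B : Module.End ℂ (MvPolynomial σ ℂ)}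
    (hA : Reduces w A) (hB : Reduces w B) {n : ℕ} {p : MvPolynomial σ ℂ} (hp : WLe w n p)
    {i j : ℕ} (hij : n < i + j) : (A ^ i) ((B ^ j) p) = 0 := by
  by_cases hj : n < j
  · rw [hB.pow_zero j n p hp hj, map_zero]
  · have h1 : WLe w (n - j) ((B ^ j) p) := hB.pow_WLe j n p hp
    exact hA.pow_zero i (n - j) _ h1 (by omega)

lemma Keeps.pow {w : σ → ℕ} {A : Module.End ℂ (MvPolynomial σ ℂ)} (hA : Keeps w A)
    (k : ℕ) {n : ℕ} {p : MvPolynomial σ ℂ} (hp : WLe w n p) : WLe w n ((A ^ k) p) := by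
  induction k with
  | zero => simpa using hp
  | succ m ih =>
      rw [pow_succ', Module.End.mul_apply]
      exact hA n _ ih

lemma Keeps.Sexp {w : σ → ℕ} {A : Module.End ℂ (MvPolynomial σ ℂ)} (hA : Keeps w A)
    (N : ℕ) {n : ℕ} {p : MvPolynomial σ ℂ} (hp : WLe w n p) : WLe w n (Sexp N A p) := by
  rw [Sexp_apply]
  refine WLe_sum _ _ fun k _ => ?_
  exact WLe_smul _ (hA.pow k hp)

lemma Reduces.keeps {w : σ → ℕ} {A : Module.End ℂ (MvPolynomial σ ℂ)} (hA : Reduces w A) :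
    Keeps w A := by
  intro n p hp
  cases n with
  | zero => rw [hA.2 p hp]; exact WLe_zero w 0
  | succ n' => exact WLe_mono (by omega) (hA.1 n' p hp)

lemma Sexp_eq_of_WLe {w : σ → ℕ} {A : Module.End ℂ (MvPolynomial σ ℂ)} (hA : Reduces w A)
    {n : ℕ} {p : MvPolynomial σ ℂ} (hp : WLe w n p) {N N' : ℕ} (hN : n < N) (hN' : n < N') :
    Sexp N A p = Sexp N' A p := by
  have hz : ∀ k, n + 1 ≤ k → (A ^ k) p = 0 := fun k hk => hA.pow_zero k n p hp (by omega)
  have e1 := Sexp_trunc A p hz (show n + 1 ≤ N by omega)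
  have e2 := Sexp_trunc A p hz (show n + 1 ≤ N' by omega)
  rw [e1, e2]

end Reduces

section Ops
variable {σ : Type*} [DecidableEq σ] {τ : Type*} [DecidableEq τ]

lemma pderiv_X_ite (a b : σ) : pderiv a (X b : MvPolynomial σ ℂ) = if b = a then 1 else 0 := by
  by_cases h : b = a
  · subst h; simp
  · simp [h]

lemma pderiv_mul_X (a y : σ) (q : MvPolynomial σ ℂ) :
    pderiv a (q * X y) = pderiv a q * X y + (if y = a then q else 0) := by
  rw [pderiv_mul, pderiv_X_ite]
  by_cases h : y = a <;> simp [h]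

lemma pderiv_pderiv_comm (u v : σ) (p : MvPolynomial σ ℂ) :
    pderiv u (pderiv v p) = pderiv v (pderiv u p) := by
  induction p using MvPolynomial.induction_on with
  | C a => simp
  | add p q hp hq => simp [hp, hq]
  | mul_X p y hp =>
      have key2 : ∀ (a b : σ) (q : MvPolynomial σ ℂ),
          pderiv a (if y = b then q else 0) = if y = b then pderiv a q else 0 := by
        intro a b q; split <;> simp
      rw [pderiv_mul_X, map_add, pderiv_mul_X, key2,
          pderiv_mul_X, map_add, pderiv_mul_X, key2, hp]
      ring

/-- the partial derivative as an endomorphism -/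
def pdE (v : σ) : Module.End ℂ (MvPolynomial σ ℂ) := (pderiv v : Derivation ℂ _ _).toLinearMap

@[simp] lemma pdE_apply (v : σ) (p : MvPolynomial σ ℂ) : pdE v p = pderiv v p := rfl

/-- multiplication by X v as an endomorphism -/
def mXE (v : σ) : Module.End ℂ (MvPolynomial σ ℂ) := LinearMap.mulLeft ℂ (X v)

@[simp] lemma mXE_apply (v : σ) (p : MvPolynomial σ ℂ) : mXE v p = X v * p := rfl

lemma pdE_comm (u v : σ) : Commute (pdE u) (pdE v) := by
  refine LinearMap.ext fun p => ?_
  simp [Module.End.mul_apply, pderiv_pderiv_comm]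

lemma mXE_pdE_comm {u v : σ} (h : u ≠ v) : Commute (mXE u) (pdE v) := by
  refine LinearMap.ext fun p => ?_
  simp only [Module.End.mul_apply, mXE_apply, pdE_apply, pderiv_mul]
  rw [pderiv_X_of_ne h]
  ring

lemma mXE_mXE_comm (u v : σ) : Commute (mXE u) (mXE v) := by
  refine LinearMap.ext fun p => ?_
  simp only [Module.End.mul_apply, mXE_apply]
  ring

/-- chain rule for `pderiv` through a variable substitution `rename f`. -/
lemma pderiv_rename_eq (f : σ → τ) (u : τ) (S : Finset σ) (hS : ∀ x, f x = u ↔ x ∈ S)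
    (p : MvPolynomial σ ℂ) :
    pderiv u (rename f p) = ∑ x ∈ S, rename f (pderiv x p) := by
  induction p using MvPolynomial.induction_on with
  | C a => simp
  | add p q hp hq =>
      simp only [map_add, hp, hq, ← Finset.sum_add_distrib]
  | mul_X p y hp =>
      rw [map_mul, rename_X, pderiv_mul_X, hp]
      have hterm : ∀ x ∈ S, rename f (pderiv x (p * X y))
          = rename f (pderiv x p) * X (f y) + (if x = y then rename f p else 0) := by
        intro x _
        rw [pderiv_mul_X, map_add, map_mul, rename_X]
        by_cases h : y = x <;> simp [h, eq_comm]
      rw [Finset.sum_congr rfl hterm, Finset.sum_add_distrib, ← Finset.sum_mul,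
        Finset.sum_ite_eq' S y (fun _ => rename f p)]
      by_cases h : y ∈ S
      · have hf : f y = u := (hS y).2 h
        simp [h, hf]
      · have hf : f y ≠ u := fun hc => h ((hS y).1 hc)
        simp [h, pderiv_X_ite, hf]

lemma conj_pow {Mo : Type*} [Monoid Mo] {a r b : Mo} (h : a * r = r * b) (k : ℕ) :
    a ^ k * r = r * b ^ k := by
  induction k with
  | zero => simp
  | succ m ih =>
      rw [pow_succ', pow_succ', mul_assoc, ih, ← mul_assoc, h, mul_assoc]

lemma Sexp_conj {M : Type*} [AddCommGroup M] [Module ℂ M]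
    {A B R : Module.End ℂ M} (h : A * R = R * B) (N : ℕ) (p : M) :
    Sexp N A (R p) = R (Sexp N B p) := by
  rw [Sexp_apply, Sexp_apply, map_sum]
  refine Finset.sum_congr rfl fun k _ => ?_
  rw [map_smul]
  congr 1
  have := conj_pow h k
  calc (A ^ k) (R p) = ((A ^ k) * R) p := rfl
    _ = (R * B ^ k) p := by rw [this]
    _ = R ((B ^ k) p) := rfl

end Ops


section Concrete

/-- rename as a linear map -/
def rnL {σ τ : Type*} (f : σ → τ) : MvPolynomial σ ℂ →ₗ[ℂ] MvPolynomial τ ℂ :=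
  (rename f).toLinearMap

@[simp] lemma rnL_apply {σ τ : Type*} (f : σ → τ) (p : MvPolynomial σ ℂ) :
    rnL f p = rename f p := rfl

variable {F : Type*} [DecidableEq F] {F' : Type*} [DecidableEq F']

/-- the translation operator `Σ_v X (z,v) ∂_(i,v)` -/
def TE (z i : F) : Module.End ℂ (MvPolynomial (F × Idx) ℂ) :=
  ∑ v : Idx, mXE (z, v) * pdE (i, v)

/-- contraction of derivatives in slots i,j along the ε-symbol -/
def DE (e : Fin 2 → Idx) (i j : F) : Module.End ℂ (MvPolynomial (F × Idx) ℂ) :=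
  ∑ a : Fin 2, ∑ b : Fin 2, eps a b • (pdE (i, e b) * pdE (j, e a))

/-- the Poisson-type bidifferential operator between slots i and j -/
def QE (Λ : ℂ) (i j : F) : Module.End ℂ (MvPolynomial (F × Idx) ℂ) :=
  Λ • DE Sum.inl i j + DE Sum.inr i j

/-- weight: auxiliary variables (slot ≠ z) count 1 -/
def wAux (z : F) : F × Idx → ℕ := fun v => if v.1 = z then 0 else 1

/-- weight: variables in slots OUTSIDE s count 1 -/
def wIn (s : Finset F) : F × Idx → ℕ := fun v => if v.1 ∈ s then 0 else 1

lemma Reduces_TE {z i : F} (hi : i ≠ z) : Reduces (wAux z) (TE z i) := by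
  refine Reduces.sum _ _ fun v _ => ?_
  constructor
  · intro n p hp
    have h1 : WLe (wAux z) n (pderiv (i, v) p) :=
      WLe_pderiv (by simp [wAux, hi]) hp
    have h2 := WLe_mul (WLe_X (w := wAux z) (v := (z, v)) (le_refl _)) h1
    simpa [wAux, Module.End.mul_apply] using h2
  · intro p hp
    have h1 : pderiv (i, v) p = 0 := pderiv_eq_zero_of_WLe (by simp [wAux, hi]) hp
    simp [Module.End.mul_apply, h1]

lemma Reduces_DE {z : F} (e : Fin 2 → Idx) {i j : F} (hj : j ≠ z) :
    Reduces (wAux z) (DE e i j) := by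
  refine Reduces.sum _ _ fun a _ => Reduces.sum _ _ fun b _ => Reduces.smul _ ?_
  constructor
  · intro n p hp
    have h1 : WLe (wAux z) n (pderiv (j, e a) p) :=
      WLe_pderiv (by simp [wAux, hj]) hp
    have h2 := WLe_pderiv_le h1 (i, e b)
    simpa [Module.End.mul_apply] using h2
  · intro p hp
    have h1 : pderiv (j, e a) p = 0 := pderiv_eq_zero_of_WLe (by simp [wAux, hj]) hp
    simp [Module.End.mul_apply, h1]

lemma Reduces_QE {z : F} (Λ : ℂ) {i j : F} (hj : j ≠ z) : Reduces (wAux z) (QE Λ i j) :=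
  Reduces.add (Reduces.smul _ (Reduces_DE _ hj)) (Reduces_DE _ hj)

lemma Keeps_DE (w : F × Idx → ℕ) (e : Fin 2 → Idx) (i j : F) : Keeps w (DE e i j) := by
  intro n p hp
  unfold DE
  rw [LinearMap.sum_apply]
  refine WLe_sum _ _ fun a _ => ?_
  rw [LinearMap.sum_apply]
  refine WLe_sum _ _ fun b _ => ?_
  rw [LinearMap.smul_apply]
  refine WLe_smul _ ?_
  rw [Module.End.mul_apply]
  exact WLe_pderiv_le (WLe_pderiv_le hp _) _

lemma Keeps_QE (w : F × Idx → ℕ) (Λ : ℂ) (i j : F) : Keeps w (QE Λ i j) := by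
  intro n p hp
  unfold QE
  rw [LinearMap.add_apply, LinearMap.smul_apply]
  exact WLe_add (WLe_smul _ (Keeps_DE w _ i j n p hp)) (Keeps_DE w _ i j n p hp)

lemma Keeps.add {w : F × Idx → ℕ} {A B : Module.End ℂ (MvPolynomial (F × Idx) ℂ)}
    (hA : Keeps w A) (hB : Keeps w B) : Keeps w (A + B) := by
  intro n p hp
  rw [LinearMap.add_apply]
  exact WLe_add (hA n p hp) (hB n p hp)

lemma Commute_DE (e e' : Fin 2 → Idx) (i j k l : F) :
    Commute (DE e i j) (DE e' k l) := by
  refine Commute.sum_left _ _ _ fun a _ => Commute.sum_left _ _ _ fun b _ => ?_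
  refine Commute.sum_right _ _ _ fun c _ => Commute.sum_right _ _ _ fun d _ => ?_
  have base : Commute (pdE (i, e b) * pdE (j, e a)) (pdE (k, e' d) * pdE (l, e' c)) := by
    have c1 := pdE_comm (σ := F × Idx) (i, e b) (k, e' d)
    have c2 := pdE_comm (σ := F × Idx) (i, e b) (l, e' c)
    have c3 := pdE_comm (σ := F × Idx) (j, e a) (k, e' d)
    have c4 := pdE_comm (σ := F × Idx) (j, e a) (l, e' c)
    exact (c1.mul_right c2).mul_left (c3.mul_right c4)
  exact (base.smul_left _).smul_right _

lemma Commute_QE (Λ Λ' : ℂ) (i j k l : F) : Commute (QE Λ i j) (QE Λ' k l) := by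
  unfold QE
  have h1 := Commute_DE (F := F) Sum.inl Sum.inl i j k l
  have h2 := Commute_DE (F := F) Sum.inl Sum.inr i j k l
  have h3 := Commute_DE (F := F) Sum.inr Sum.inl i j k l
  have h4 := Commute_DE (F := F) Sum.inr Sum.inr i j k l
  exact Commute.add_left
    (Commute.add_right ((h1.smul_left Λ).smul_right Λ') (h2.smul_left Λ))
    (Commute.add_right (h3.smul_right Λ') h4)

lemma Commute_TE_QE (Λ : ℂ) (z i j k : F) (hj : j ≠ z) (hk : k ≠ z) :
    Commute (TE z i) (QE Λ j k) := by
  unfold TE QE DE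
  refine Commute.sum_left _ _ _ fun v _ => ?_
  have base : ∀ (e : Fin 2 → Idx) (a b : Fin 2),
      Commute (mXE ((z, v) : F × Idx) * pdE (i, v)) (pdE (j, e b) * pdE (k, e a)) := by
    intro e a b
    have c1 : Commute (mXE ((z, v) : F × Idx)) (pdE (j, e b)) :=
      mXE_pdE_comm (fun hc => hj (congrArg Prod.fst hc).symm)
    have c2 : Commute (mXE ((z, v) : F × Idx)) (pdE (k, e a)) :=
      mXE_pdE_comm (fun hc => hk (congrArg Prod.fst hc).symm)
    have c3 := pdE_comm (σ := F × Idx) (i, v) (j, e b)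
    have c4 := pdE_comm (σ := F × Idx) (i, v) (k, e a)
    exact (c1.mul_right c2).mul_left (c3.mul_right c4)
  refine Commute.add_right ?_ ?_
  · refine Commute.smul_right ?_ _
    refine Commute.sum_right _ _ _ fun a _ => Commute.sum_right _ _ _ fun b _ => ?_
    exact (base Sum.inl a b).smul_right _
  · refine Commute.sum_right _ _ _ fun a _ => Commute.sum_right _ _ _ fun b _ => ?_
    exact (base Sum.inr a b).smul_right _

lemma sum_swap4 {α β γ δ M : Type*} [AddCommMonoid M] (sa : Finset α) (sb : Finset β)
    (sc : Finset γ) (sd : Finset δ) (f : α → β → γ → δ → M) :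
    ∑ a ∈ sa, ∑ b ∈ sb, ∑ c ∈ sc, ∑ d ∈ sd, f a b c d
      = ∑ d ∈ sd, ∑ c ∈ sc, ∑ a ∈ sa, ∑ b ∈ sb, f a b c d :=
  calc ∑ a ∈ sa, ∑ b ∈ sb, ∑ c ∈ sc, ∑ d ∈ sd, f a b c d
      = ∑ a ∈ sa, ∑ b ∈ sb, ∑ d ∈ sd, ∑ c ∈ sc, f a b c d :=
        Finset.sum_congr rfl fun a _ => Finset.sum_congr rfl fun b _ => Finset.sum_comm
    _ = ∑ a ∈ sa, ∑ d ∈ sd, ∑ b ∈ sb, ∑ c ∈ sc, f a b c d :=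
        Finset.sum_congr rfl fun a _ => Finset.sum_comm
    _ = ∑ d ∈ sd, ∑ a ∈ sa, ∑ b ∈ sb, ∑ c ∈ sc, f a b c d := Finset.sum_comm
    _ = ∑ d ∈ sd, ∑ a ∈ sa, ∑ c ∈ sc, ∑ b ∈ sb, f a b c d :=
        Finset.sum_congr rfl fun d _ => Finset.sum_congr rfl fun a _ => Finset.sum_comm
    _ = ∑ d ∈ sd, ∑ c ∈ sc, ∑ a ∈ sa, ∑ b ∈ sb, f a b c d :=
        Finset.sum_congr rfl fun d _ => Finset.sum_comm

/-- chain rule for `DE` under a slot substitution. -/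
lemma DE_comp_rn (g : F → F') (e : Fin 2 → Idx) (I J : Finset F) (i' j' : F')
    (hI : ∀ x, g x = i' ↔ x ∈ I) (hJ : ∀ x, g x = j' ↔ x ∈ J) :
    (DE e i' j').comp (rnL (fun x : F × Idx => (g x.1, x.2)))
      = ∑ i ∈ I, ∑ j ∈ J, (rnL (fun x : F × Idx => (g x.1, x.2))).comp (DE e i j) := by
  have hpd : ∀ (u : F') (v : Idx) (Sv : Finset F), (∀ x, g x = u ↔ x ∈ Sv) →
      ∀ (p : MvPolynomial (F × Idx) ℂ),
      pderiv ((u, v) : F' × Idx) (rename (fun x : F × Idx => (g x.1, x.2)) p)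
        = ∑ x ∈ Sv, rename (fun x : F × Idx => (g x.1, x.2))
            (pderiv ((x, v) : F × Idx) p) := by
    intro u v Sv hSv p
    have hS : ∀ y : F × Idx, (fun x : F × Idx => (g x.1, x.2)) y = (u, v)
        ↔ y ∈ Sv.image (fun i => ((i, v) : F × Idx)) := by
      intro y
      rw [Finset.mem_image]
      constructor
      · intro hE
        have h1 : g y.1 = u := congrArg Prod.fst hE
        have h2 : y.2 = v := congrArg Prod.snd hE
        exact ⟨y.1, (hSv y.1).1 h1, Prod.ext rfl h2.symm⟩
      · rintro ⟨x, hx, rfl⟩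
        show ((g x, v) : F' × Idx) = (u, v)
        rw [(hSv x).2 hx]
    rw [pderiv_rename_eq _ (u, v) _ hS p]
    rw [Finset.sum_image]
    intro x _ y _ hxy
    simpa using hxy
  apply LinearMap.ext
  intro p
  have key : ∀ a b : Fin 2,
      pderiv ((i', e b) : F' × Idx) (pderiv ((j', e a) : F' × Idx)
          (rename (fun x : F × Idx => (g x.1, x.2)) p))
      = ∑ j ∈ J, ∑ i ∈ I, rename (fun x : F × Idx => (g x.1, x.2))
          (pderiv ((i, e b) : F × Idx) (pderiv ((j, e a) : F × Idx) p)) := by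
    intro a b
    rw [hpd j' (e a) J hJ p, map_sum]
    exact Finset.sum_congr rfl fun j _ => hpd i' (e b) I hI _
  unfold DE
  simp only [LinearMap.sum_apply, LinearMap.comp_apply, LinearMap.smul_apply,
    Module.End.mul_apply, pdE_apply, rnL_apply, map_sum, map_smul, key, Finset.smul_sum]
  exact sum_swap4 _ _ _ _ _

lemma QE_comp_rn (g : F → F') (Λ : ℂ) (I J : Finset F) (i' j' : F')
    (hI : ∀ x, g x = i' ↔ x ∈ I) (hJ : ∀ x, g x = j' ↔ x ∈ J) :
    (QE Λ i' j').comp (rnL (fun x : F × Idx => (g x.1, x.2)))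
      = ∑ i ∈ I, ∑ j ∈ J, (rnL (fun x : F × Idx => (g x.1, x.2))).comp (QE Λ i j) := by
  unfold QE
  rw [LinearMap.add_comp, LinearMap.smul_comp]
  rw [DE_comp_rn g Sum.inl I J i' j' hI hJ, DE_comp_rn g Sum.inr I J i' j' hI hJ]
  rw [Finset.smul_sum, ← Finset.sum_add_distrib]
  refine Finset.sum_congr rfl fun i _ => ?_
  rw [Finset.smul_sum, ← Finset.sum_add_distrib]
  refine Finset.sum_congr rfl fun j _ => ?_
  rw [LinearMap.comp_add, LinearMap.comp_smul]

/-- conjugation through `Sexp` along a linear map -/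
lemma Sexp_comp_conj {M M' : Type*} [AddCommGroup M] [Module ℂ M] [AddCommGroup M']
    [Module ℂ M'] {A : Module.End ℂ M'} {B : Module.End ℂ M} {R : M →ₗ[ℂ] M'}
    (h : A.comp R = R.comp B) (N : ℕ) (p : M) :
    Sexp N A (R p) = R (Sexp N B p) := by
  have hpow : ∀ k, (A ^ k).comp R = R.comp (B ^ k) := by
    intro k
    induction k with
    | zero =>
        apply LinearMap.ext; intro q
        simp
    | succ m ih =>
        apply LinearMap.ext; intro q
        calc ((A ^ (m + 1)) ∘ₗ R) q = A (((A ^ m) ∘ₗ R) q) := by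
              rw [pow_succ']; rfl
          _ = A ((R ∘ₗ (B ^ m)) q) := by rw [ih]
          _ = (A ∘ₗ R) ((B ^ m) q) := rfl
          _ = (R ∘ₗ B) ((B ^ m) q) := by rw [h]
          _ = (R ∘ₗ (B ^ (m + 1))) q := by rw [pow_succ']; rfl
  rw [Sexp_apply, Sexp_apply, map_sum]
  refine Finset.sum_congr rfl fun k _ => ?_
  rw [map_smul]
  congr 1
  have := LinearMap.congr_fun (hpow k) p
  simpa using this

end Concrete

section Taylor

/-- the full translation operator on V3 -/
def T3 : Module.End ℂ (MvPolynomial V3 ℂ) := TE 0 1 + TE 0 2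

/-- auxiliary weight on V3 -/
def w3 : V3 → ℕ := wAux (0 : Fin 3)

lemma setAux_add (p q : MvPolynomial V3 ℂ) : setAux (p + q) = setAux p + setAux q := by
  unfold setAux; rw [map_add]

lemma setAux_mul (p q : MvPolynomial V3 ℂ) : setAux (p * q) = setAux p * setAux q := by
  unfold setAux; rw [map_mul]

lemma setAux_smul (c : ℂ) (p : MvPolynomial V3 ℂ) : setAux (c • p) = c • setAux p := by
  unfold setAux; rw [map_smul]

lemma setAux_zero : setAux (0 : MvPolynomial V3 ℂ) = 0 := by
  unfold setAux; rw [map_zero]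

lemma setAux_C (a : ℂ) : setAux (C a) = C a := by
  unfold setAux; rw [aeval_C]; rfl

lemma setAux_X (u : V3) : setAux (X u) = if u.1 = 0 then X u.2 else 0 := by
  unfold setAux; rw [aeval_X]

lemma TE_mul {F : Type*} [DecidableEq F] (z i : F) (p q : MvPolynomial (F × Idx) ℂ) :
    TE z i (p * q) = TE z i p * q + p * TE z i q := by
  unfold TE
  simp only [LinearMap.sum_apply, Module.End.mul_apply, mXE_apply, pdE_apply, pderiv_mul]
  rw [Finset.sum_mul, Finset.mul_sum, ← Finset.sum_add_distrib]
  refine Finset.sum_congr rfl fun v _ => ?_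
  ring

lemma T3_mul (p q : MvPolynomial V3 ℂ) : T3 (p * q) = T3 p * q + p * T3 q := by
  unfold T3
  simp only [LinearMap.add_apply, TE_mul]
  ring

lemma TE_X {F : Type*} [DecidableEq F] (z i i' : F) (v : Idx) :
    TE z i (X (i', v)) = if i' = i then X (z, v) else 0 := by
  unfold TE
  simp only [LinearMap.sum_apply, Module.End.mul_apply, mXE_apply, pdE_apply]
  rw [Finset.sum_congr rfl (fun w _ => by rw [pderiv_X_ite])]
  by_cases h : i' = i
  · subst h
    rw [if_pos rfl]
    rw [Finset.sum_eq_single v]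
    · simp
    · intro w _ hw
      rw [if_neg (by simp [Prod.ext_iff, Ne.symm hw]), mul_zero]
    · intro hv; exact absurd (Finset.mem_univ v) hv
  · rw [if_neg h]
    refine Finset.sum_eq_zero fun w _ => ?_
    rw [if_neg (by simp [Prod.ext_iff, h]), mul_zero]

/-- translate of a variable -/
def tX (v : V3) : MvPolynomial V3 ℂ := if v.1 = 0 then 0 else X ((0 : Fin 3), v.2)

lemma T3_X (v : V3) : T3 (X v) = tX v := by
  obtain ⟨i, w⟩ := v
  unfold T3 tX
  rw [LinearMap.add_apply, TE_X, TE_X]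
  fin_cases i <;> simp

lemma T3_tX (v : V3) : T3 (tX v) = 0 := by
  unfold tX
  split
  · simp
  · rw [T3_X]
    unfold tX
    simp

lemma T3_C (a : ℂ) : T3 (C a) = 0 := by
  unfold T3 TE
  simp

lemma T3_pow_succ_apply (k : ℕ) (r : MvPolynomial V3 ℂ) :
    (T3 ^ (k + 1)) r = T3 ((T3 ^ k) r) := by
  rw [pow_succ', Module.End.mul_apply]

lemma T3_pow_mul_X (v : V3) : ∀ (k : ℕ) (q : MvPolynomial V3 ℂ),
    (T3 ^ k) (q * X v) = (T3 ^ k) q * X v + k • ((T3 ^ (k - 1)) q * tX v) := by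
  intro k
  induction k with
  | zero => intro q; simp
  | succ m ih =>
      intro q
      rw [T3_pow_succ_apply, ih q, map_add, map_nsmul]
      simp only [T3_mul, T3_X, T3_tX, mul_zero, add_zero]
      rw [Nat.add_sub_cancel, ← T3_pow_succ_apply m q]
      cases m with
      | zero => simp
      | succ m' =>
          rw [show m' + 1 - 1 = m' from rfl, ← T3_pow_succ_apply m' q]
          simp only [← Nat.cast_smul_eq_nsmul ℂ]
          push_cast
          module

lemma T3_pow_C (a : ℂ) (k : ℕ) (hk : 1 ≤ k) : (T3 ^ k) (C a) = 0 := by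
  cases k with
  | zero => omega
  | succ m =>
      rw [pow_succ, Module.End.mul_apply, T3_C, map_zero]

lemma Sexp_C (N : ℕ) (hN : 1 ≤ N) (a : ℂ) : Sexp N T3 (C a) = C a := by
  rw [Sexp_trunc T3 (C a) (fun k hk => T3_pow_C a k hk) hN]
  rw [Sexp_apply, Finset.sum_range_one]
  simp

lemma factorial_succ_coeff (k : ℕ) :
    (((k + 1).factorial : ℂ))⁻¹ * ((k : ℂ) + 1) = ((k.factorial : ℂ))⁻¹ := by
  rw [Nat.factorial_succ]
  have h1 : ((k.factorial : ℂ)) ≠ 0 := Nat.cast_ne_zero.2 k.factorial_ne_zero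
  have h2 : ((k : ℂ) + 1) ≠ 0 := by
    have : ((k + 1 : ℕ) : ℂ) ≠ 0 := Nat.cast_ne_zero.2 (Nat.succ_ne_zero k)
    simpa [Nat.cast_add] using this
  push_cast
  rw [mul_inv, mul_comm (((k : ℂ) + 1))⁻¹ _, mul_assoc, inv_mul_cancel₀ h2, mul_one]

lemma taylor_monomial : ∀ (s : ℕ) (m : V3 →₀ ℕ) (a : ℂ) (N : ℕ),
    (m.sum fun _ k => k) ≤ s → wdeg w3 m < N →
    setAux (Sexp N T3 (monomial m a)) = rename Prod.snd (monomial m a) := by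
  intro s
  induction s with
  | zero =>
      intro m a N hs hN
      have hm : m = 0 := by
        ext v
        simp only [Finsupp.coe_zero, Pi.zero_apply]
        by_cases hv : v ∈ m.support
        · have : m v ≤ m.sum fun _ k => k :=
            Finset.single_le_sum (f := fun v => m v) (fun _ _ => Nat.zero_le _) hv
          omega
        · simpa using Finsupp.notMem_support_iff.1 hv
      subst hm
      rw [← MvPolynomial.C_apply, Sexp_C N (by omega) a, setAux_C, rename_C]
  | succ s ih =>
      intro m a N hs hN
      by_cases hm : m = 0
      · subst hm
        rw [← MvPolynomial.C_apply, Sexp_C N (by omega) a, setAux_C, rename_C]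
      · obtain ⟨v, hv⟩ := Finsupp.support_nonempty_iff.2 hm
        set m' := m - Finsupp.single v 1 with hm'
        have hle : Finsupp.single v 1 ≤ m := by
          rw [Finsupp.single_le_iff]
          have := Finsupp.mem_support_iff.1 hv
          omega
        have hmm : m' + Finsupp.single v 1 = m := tsub_add_cancel_of_le hle
        have hmon : monomial m a = monomial m' a * X v := by
          rw [MvPolynomial.X, MvPolynomial.monomial_mul, mul_one, hmm]
        have hsize : (m'.sum fun _ k => k) + 1 = (m.sum fun _ k => k) := by
          have := congrArg (fun mm => mm.sum fun (_ : V3) (k : ℕ) => k) hmm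
          simpa [Finsupp.sum_add_index, Finsupp.sum_single_index] using this
        have hwdeg : wdeg w3 m' + w3 v = wdeg w3 m := by
          rw [← hmm, wdeg_add, wdeg_single, mul_one]
        obtain ⟨N', rfl⟩ : ∃ N', N = N' + 1 := ⟨N - 1, by omega⟩
        set q := monomial m' a with hq
        -- expand Sexp (N'+1) T3 (q * X v)
        have hexp : Sexp (N' + 1) T3 (q * X v)
            = Sexp (N' + 1) T3 q * X v + Sexp N' T3 q * tX v := by
          rw [Sexp_apply]
          rw [Finset.sum_congr rfl fun k _ => by rw [T3_pow_mul_X v k q]]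
          rw [Finset.sum_congr rfl fun k (_ : k ∈ Finset.range (N' + 1)) => smul_add
            ((k.factorial : ℂ))⁻¹ ((T3 ^ k) q * X v) (k • ((T3 ^ (k - 1)) q * tX v))]
          rw [Finset.sum_add_distrib]
          congr 1
          · rw [Sexp_apply, Finset.sum_mul]
            exact Finset.sum_congr rfl fun k _ => (smul_mul_assoc _ _ _).symm
          · rw [Finset.sum_range_succ']
            have hzero : ((0:ℕ).factorial : ℂ)⁻¹ • ((0:ℕ) • ((T3 ^ (0 - 1)) q * tX v)) = 0 := by
              simp
            rw [hzero, add_zero]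
            rw [Sexp_apply, Finset.sum_mul]
            refine Finset.sum_congr rfl fun k _ => ?_
            rw [Nat.add_sub_cancel]
            have : ((k + 1).factorial : ℂ)⁻¹ • ((k + 1) • ((T3 ^ k) q * tX v))
                = ((k.factorial : ℂ))⁻¹ • ((T3 ^ k) q * tX v) := by
              rw [← Nat.cast_smul_eq_nsmul ℂ (k + 1) ((T3 ^ k) q * tX v), smul_smul]
              congr 1
              push_cast
              exact factorial_succ_coeff k
            rw [this, smul_mul_assoc]
        rw [hmon, hexp, setAux_add, setAux_mul, setAux_mul, map_mul, rename_X]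
        have hsz' : (m'.sum fun _ k => k) ≤ s := by omega
        by_cases hv0 : v.1 = 0
        · have hw3 : w3 v = 0 := by simp [w3, wAux, hv0]
          have hIH := ih m' a (N' + 1) hsz' (by omega)
          have htX : tX v = 0 := by simp [tX, hv0]
          have hXv : setAux (X v : MvPolynomial V3 ℂ) = X v.2 := by
            rw [setAux_X, if_pos hv0]
          rw [← hq] at hIH
          rw [htX, setAux_zero, mul_zero, add_zero, hXv, hIH]
        · have hw3 : w3 v = 1 := by simp [w3, wAux, hv0]
          have hIH := ih m' a N' hsz' (by omega)
          have htX : tX v = X ((0 : Fin 3), v.2) := by simp [tX, hv0]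
          have hXv : setAux (X v : MvPolynomial V3 ℂ) = 0 := by
            rw [setAux_X, if_neg hv0]
          have htX2 : setAux (X (((0 : Fin 3), v.2) : V3)) = X v.2 := by
            rw [setAux_X]; simp
          rw [← hq] at hIH
          rw [hXv, mul_zero, zero_add, htX, htX2, hIH]

end Taylor

section Bridge3

lemma setAux_sum {ι : Type*} (s : Finset ι) (F : ι → MvPolynomial V3 ℂ) :
    setAux (∑ i ∈ s, F i) = ∑ i ∈ s, setAux (F i) := by
  unfold setAux; rw [map_sum]

lemma taylor {n N : ℕ} (p : MvPolynomial V3 ℂ) (hp : WLe w3 n p) (hN : n < N) :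
    setAux (Sexp N T3 p) = rename Prod.snd p := by
  have h1 : Sexp N T3 p = ∑ m ∈ p.support, Sexp N T3 (monomial m (coeff m p)) := by
    conv_lhs => rw [p.as_sum]
    rw [map_sum]
  rw [h1, setAux_sum]
  rw [Finset.sum_congr rfl fun m hm => taylor_monomial (m.sum fun _ k => k) m (coeff m p) N
    (le_refl _) (lt_of_le_of_lt (hp m hm) hN)]
  rw [← map_sum, ← p.as_sum]

/-- the bidifferential part on V3 -/
def P3 (Λ : ℂ) : Module.End ℂ (MvPolynomial V3 ℂ) := QE Λ 1 2

lemma TE0_apply (i : Fin 3) (p : MvPolynomial V3 ℂ) :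
    TE (0 : Fin 3) i p = angY i p + sqY i p := by
  unfold TE angY sqY
  simp only [LinearMap.sum_apply, Module.End.mul_apply, mXE_apply, pdE_apply]
  rw [Fintype.sum_sum_type]

lemma DE_apply' (e : Fin 2 → Idx) (i j : Fin 3) (p : MvPolynomial V3 ℂ) :
    DE e i j p = ∑ a : Fin 2, ∑ b : Fin 2, eps a b • pderiv (i, e b) (pderiv (j, e a) p) := by
  unfold DE
  simp only [LinearMap.sum_apply, LinearMap.smul_apply, Module.End.mul_apply, pdE_apply]

lemma starOp_eq (Λ : ℂ) (p : MvPolynomial V3 ℂ) : starOp Λ p = (T3 + P3 Λ) p := by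
  unfold starOp T3 P3 QE
  simp only [LinearMap.add_apply, LinearMap.smul_apply, TE0_apply, DE_apply']
  unfold angDD sqDD
  abel

lemma starOp_iterate (Λ : ℂ) (k : ℕ) (p : MvPolynomial V3 ℂ) :
    (starOp Λ)^[k] p = ((T3 + P3 Λ) ^ k) p := by
  rw [Module.End.pow_apply]
  have hfun : starOp Λ = ⇑(T3 + P3 Λ) := funext (starOp_eq Λ)
  rw [hfun]

lemma expApply_eq (Λ : ℂ) (p : MvPolynomial V3 ℂ) :
    expApply (starOp Λ) p = Sexp (p.totalDegree + 1) (T3 + P3 Λ) p := by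
  unfold expApply
  rw [Sexp_apply]
  exact Finset.sum_congr rfl fun k _ => by rw [starOp_iterate]

lemma w3_le_one (v : V3) : w3 v ≤ 1 := by
  unfold w3 wAux
  split <;> omega

lemma WLe_w3_totalDegree (p : MvPolynomial V3 ℂ) : WLe w3 p.totalDegree p :=
  WLe_weight_mono w3_le_one (WLe_one_totalDegree p)

lemma Reduces_T3 : Reduces w3 T3 :=
  Reduces.add (Reduces_TE (by decide)) (Reduces_TE (by decide))

lemma Reduces_P3 (Λ : ℂ) : Reduces w3 (P3 Λ) := Reduces_QE Λ (by decide)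

lemma Commute_T3_P3 (Λ : ℂ) : Commute T3 (P3 Λ) :=
  Commute.add_left (Commute_TE_QE Λ 0 1 1 2 (by decide) (by decide))
    (Commute_TE_QE Λ 0 2 1 2 (by decide) (by decide))

lemma bridge3 (Λ : ℂ) (f g : MvPolynomial Idx ℂ) {n N : ℕ}
    (hp : WLe w3 n (emb 1 f * emb 2 g)) (hN : n < N) :
    starP Λ f g = rename Prod.snd (Sexp N (P3 Λ) (emb 1 f * emb 2 g)) := by
  set p := emb 1 f * emb 2 g with hpdef
  set d := p.totalDegree with hd
  have hdp : WLe w3 d p := WLe_w3_totalDegree p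
  set M := max n d with hM
  have step1 : Sexp (d + 1) (T3 + P3 Λ) p = Sexp (M + 1) (T3 + P3 Λ) p :=
    Sexp_eq_of_WLe (Reduces.add Reduces_T3 (Reduces_P3 Λ)) hdp (by omega)
      (by simp only [hM]; omega)
  have step2 : Sexp (M + 1) (T3 + P3 Λ) p = Sexp (M + 1) T3 (Sexp (M + 1) (P3 Λ) p) := by
    refine Sexp_add_apply (Commute_T3_P3 Λ) (M + 1) p fun i j hij => ?_
    refine Reduces.mixed_zero Reduces_T3 (Reduces_P3 Λ) hdp ?_
    have : d ≤ M := le_max_right n d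
    omega
  have hx : WLe w3 d (Sexp (M + 1) (P3 Λ) p) :=
    Keeps.Sexp (Keeps_QE w3 Λ 1 2) _ hdp
  have step3 : setAux (Sexp (M + 1) T3 (Sexp (M + 1) (P3 Λ) p))
      = rename Prod.snd (Sexp (M + 1) (P3 Λ) p) := by
    refine taylor _ hx ?_
    have : d ≤ M := le_max_right n d
    omega
  have step4 : Sexp (M + 1) (P3 Λ) p = Sexp N (P3 Λ) p :=
    Sexp_eq_of_WLe (Reduces_P3 Λ) hp (by simp only [hM]; omega) hN
  show setAux (expApply (starOp Λ) p) = _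
  rw [expApply_eq, ← hd, step1, step2, step3, step4]

end Bridge3

section Bridge4

/-- four-slot variable type -/
abbrev V4 := Fin 4 × Idx

/-- embedding into slot i of V4 -/
def Em (i : Fin 4) (f : MvPolynomial Idx ℂ) : MvPolynomial V4 ℂ :=
  rename (fun v => (i, v)) f

/-- slot inclusion Fin 3 → Fin 4 -/
def g3 : Fin 3 → Fin 4 := fun i => ⟨i.1, by omega⟩

lemma QE_comp_rn_single {F F' : Type*} [DecidableEq F] [DecidableEq F'] (g : F → F') (Λ : ℂ)
    (i j : F) (i' j' : F') (hI : ∀ x, g x = i' ↔ x = i) (hJ : ∀ x, g x = j' ↔ x = j) :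
    (QE Λ i' j').comp (rnL (fun x : F × Idx => (g x.1, x.2)))
      = (rnL (fun x : F × Idx => (g x.1, x.2))).comp (QE Λ i j) := by
  have h := QE_comp_rn g Λ {i} {j} i' j'
    (fun x => by rw [hI x, Finset.mem_singleton])
    (fun x => by rw [hJ x, Finset.mem_singleton])
  rw [h, Finset.sum_singleton, Finset.sum_singleton]

lemma bridge_conj3 (Λ : ℂ) :
    (QE Λ (1 : Fin 4) 2).comp (rnL (fun x : V3 => ((g3 x.1, x.2) : V4)))
      = (rnL (fun x : V3 => ((g3 x.1, x.2) : V4))).comp (QE Λ (1 : Fin 3) 2) :=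
  QE_comp_rn_single g3 Λ 1 2 1 2 (fun x => by fin_cases x <;> simp [g3] <;> decide)
    (fun x => by fin_cases x <;> simp [g3] <;> decide)

lemma Em_eq_rename (i : Fin 3) (f : MvPolynomial Idx ℂ) :
    Em ⟨i.1, by omega⟩ f = rename (fun x : V3 => ((g3 x.1, x.2) : V4)) (emb i f) := by
  unfold Em emb g3
  rw [rename_rename]
  rfl

lemma snd_rename_g3 (x : MvPolynomial V3 ℂ) :
    rename Prod.snd (rename (fun x : V3 => ((g3 x.1, x.2) : V4)) x) = rename Prod.snd x := by
  rw [rename_rename]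
  rfl

lemma WLe_slot {F : Type*} [DecidableEq F] (w : F × Idx → ℕ) (i : F)
    (hw : ∀ v : Idx, w (i, v) ≤ 1) (f : MvPolynomial Idx ℂ) :
    WLe w f.totalDegree (rename (fun v : Idx => (i, v)) f) :=
  WLe_rename _ (fun v => hw v) (WLe_one_totalDegree f)

lemma bridge4 (Λ : ℂ) (f g : MvPolynomial Idx ℂ) {N : ℕ}
    (hN : f.totalDegree + g.totalDegree < N) :
    starP Λ f g = rename Prod.snd (Sexp N (QE Λ (1 : Fin 4) 2) (Em 1 f * Em 2 g)) := by
  set n := f.totalDegree + g.totalDegree with hn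
  have hp3 : WLe w3 n (emb 1 f * emb 2 g) :=
    WLe_mul (WLe_slot w3 1 (fun v => by simp [w3, wAux]) f)
      (WLe_slot w3 2 (fun v => by simp [w3, wAux]) g)
  rw [bridge3 Λ f g hp3 hN]
  have hEm : Em 1 f * Em 2 g
      = rename (fun x : V3 => ((g3 x.1, x.2) : V4)) (emb 1 f * emb 2 g) := by
    rw [map_mul]
    rw [show (1 : Fin 4) = (⟨(1 : Fin 3).1, by omega⟩ : Fin 4) from rfl]
    rw [show (2 : Fin 4) = (⟨(2 : Fin 3).1, by omega⟩ : Fin 4) from rfl]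
    rw [Em_eq_rename 1 f, Em_eq_rename 2 g]
  rw [hEm]
  have hconj := Sexp_comp_conj (bridge_conj3 Λ) N (emb 1 f * emb 2 g)
  rw [show rename (fun x : V3 => ((g3 x.1, x.2) : V4)) (emb 1 f * emb 2 g)
      = rnL (fun x : V3 => ((g3 x.1, x.2) : V4)) (emb 1 f * emb 2 g) from rfl]
  rw [hconj, rnL_apply, snd_rename_g3]
  rfl

/-- permutation conjugation -/
lemma QE_comp_perm (π : Equiv.Perm (Fin 4)) (Λ : ℂ) (i j : Fin 4) :
    (QE Λ (π i) (π j)).comp (rnL (fun x : V4 => ((π x.1, x.2) : V4)))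
      = (rnL (fun x : V4 => ((π x.1, x.2) : V4))).comp (QE Λ i j) :=
  QE_comp_rn_single (⇑π) Λ i j (π i) (π j)
    (fun x => ⟨fun h => π.injective h, fun h => by rw [h]⟩)
    (fun x => ⟨fun h => π.injective h, fun h => by rw [h]⟩)

lemma Em_perm (π : Equiv.Perm (Fin 4)) (i : Fin 4) (f : MvPolynomial Idx ℂ) :
    rename (fun x : V4 => ((π x.1, x.2) : V4)) (Em i f) = Em (π i) f := by
  unfold Em
  rw [rename_rename]
  rfl

lemma snd_rename_perm (π : Equiv.Perm (Fin 4)) (x : MvPolynomial V4 ℂ) :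
    rename Prod.snd (rename (fun x : V4 => ((π x.1, x.2) : V4)) x) = rename Prod.snd x := by
  rw [rename_rename]
  rfl

lemma bridge4_slots (Λ : ℂ) (f g : MvPolynomial Idx ℂ) (i j : Fin 4) (π : Equiv.Perm (Fin 4))
    (h1 : π 1 = i) (h2 : π 2 = j) {N : ℕ} (hN : f.totalDegree + g.totalDegree < N) :
    starP Λ f g = rename Prod.snd (Sexp N (QE Λ i j) (Em i f * Em j g)) := by
  rw [bridge4 Λ f g hN]
  have hEm : Em i f * Em j g
      = rename (fun x : V4 => ((π x.1, x.2) : V4)) (Em 1 f * Em 2 g) := by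
    rw [map_mul, Em_perm, Em_perm, h1, h2]
  rw [hEm]
  have hconj := Sexp_comp_conj (h1 ▸ h2 ▸ QE_comp_perm π Λ 1 2) N (Em 1 f * Em 2 g)
  rw [show rename (fun x : V4 => ((π x.1, x.2) : V4)) (Em 1 f * Em 2 g)
      = rnL (fun x : V4 => ((π x.1, x.2) : V4)) (Em 1 f * Em 2 g) from rfl]
  rw [hconj, rnL_apply, snd_rename_perm]

lemma starP_totalDegree (Λ : ℂ) (f g : MvPolynomial Idx ℂ) :
    (starP Λ f g).totalDegree ≤ f.totalDegree + g.totalDegree := by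
  set n := f.totalDegree + g.totalDegree with hn
  rw [bridge4 Λ f g (show n < n + 1 by omega)]
  have h1 : WLe (fun _ : V4 => 1) n (Em 1 f * Em 2 g) :=
    WLe_mul (WLe_slot _ 1 (fun v => le_refl _) f) (WLe_slot _ 2 (fun v => le_refl _) g)
  have h2 : WLe (fun _ : V4 => 1) n (Sexp (n + 1) (QE Λ (1 : Fin 4) 2) (Em 1 f * Em 2 g)) :=
    Keeps.Sexp (Keeps_QE _ Λ 1 2) _ h1
  have h3 : WLe (fun _ : Idx => 1) n
      (rename Prod.snd (Sexp (n + 1) (QE Λ (1 : Fin 4) 2) (Em 1 f * Em 2 g))) :=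
    WLe_rename _ (fun v => le_refl _) h2
  exact totalDegree_le_of_WLe_one h3

end Bridge4

section Assoc

/-- collapse slot 3 onto slot 1 -/
def mu13 : Fin 4 → Fin 4 := fun i => if i = 3 then 1 else i
/-- collapse slot 3 onto slot 2 -/
def mu23 : Fin 4 → Fin 4 := fun i => if i = 3 then 2 else i

lemma WLe_zero_weight {σ : Type*} [DecidableEq σ] (p : MvPolynomial σ ℂ) :
    WLe (fun _ => (0 : ℕ)) 0 p := by
  intro m hm
  unfold wdeg
  simp [Finsupp.sum]

lemma WLe_Em_zero (S : Finset (Fin 4)) (i : Fin 4) (hi : i ∈ S) (f : MvPolynomial Idx ℂ) :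
    WLe (wIn S) 0 (Em i f) :=
  WLe_rename _ (fun v => by simp [wIn, hi]) (WLe_zero_weight f)

lemma Em_slotmap (μ : Fin 4 → Fin 4) (l : Fin 4) (h : MvPolynomial Idx ℂ) :
    rename (fun x : V4 => ((μ x.1, x.2) : V4)) (Em l h) = Em (μ l) h := by
  unfold Em
  rw [rename_rename]
  rfl

lemma snd_rename_slotmap (μ : Fin 4 → Fin 4) (x : MvPolynomial V4 ℂ) :
    rename Prod.snd (rename (fun x : V4 => ((μ x.1, x.2) : V4)) x) = rename Prod.snd x := by
  rw [rename_rename]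
  rfl

lemma Em_collapse (i : Fin 4) (S : Finset (Fin 4)) (μ : Fin 4 → Fin 4)
    (hi : ∀ s ∈ S, μ s = i) (q : MvPolynomial V4 ℂ) (hq : WLe (wIn S) 0 q) :
    Em i (rename Prod.snd q) = rename (fun x : V4 => ((μ x.1, x.2) : V4)) q := by
  unfold Em
  rw [rename_rename]
  refine rename_congr_of_WLe hq ?_
  intro v hv
  have hvS : v.1 ∈ S := by
    by_contra hC
    simp [wIn, hC] at hv
  show (i, v.2) = (μ v.1, v.2)
  rw [hi v.1 hvS]

lemma QE_comp_mu13 (Λ : ℂ) :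
    (QE Λ (1 : Fin 4) 2).comp (rnL (fun x : V4 => ((mu13 x.1, x.2) : V4)))
      = (rnL (fun x : V4 => ((mu13 x.1, x.2) : V4))).comp (QE Λ 1 2 + QE Λ 3 2) := by
  have h := QE_comp_rn mu13 Λ ({1, 3} : Finset (Fin 4)) {2} 1 2 (by decide) (by decide)
  rw [h, Finset.sum_insert (by decide)]
  simp only [Finset.sum_singleton]
  rw [← LinearMap.comp_add]

lemma QE_comp_mu23 (Λ : ℂ) :
    (QE Λ (1 : Fin 4) 2).comp (rnL (fun x : V4 => ((mu23 x.1, x.2) : V4)))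
      = (rnL (fun x : V4 => ((mu23 x.1, x.2) : V4))).comp (QE Λ 1 2 + QE Λ 1 3) := by
  have h := QE_comp_rn mu23 Λ ({1} : Finset (Fin 4)) {2, 3} 1 2 (by decide) (by decide)
  rw [h, Finset.sum_singleton, Finset.sum_insert (by decide), Finset.sum_singleton,
    ← LinearMap.comp_add]


lemma pderiv_Em_ne {l i : Fin 4} (hli : l ≠ i) (v : Idx) (h : MvPolynomial Idx ℂ) :
    pderiv ((i, v) : V4) (Em l h) = 0 := by
  refine pderiv_eq_zero_of_WLe (w := wIn {l}) ?_ (WLe_Em_zero {l} l (by simp) h)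
  simp [wIn, Ne.symm hli]

lemma QE_mul_const (Λ : ℂ) (i j : Fin 4) (c : MvPolynomial V4 ℂ)
    (hci : ∀ v : Idx, pderiv ((i, v) : V4) c = 0)
    (hcj : ∀ v : Idx, pderiv ((j, v) : V4) c = 0) (x : MvPolynomial V4 ℂ) :
    QE Λ i j (x * c) = QE Λ i j x * c := by
  unfold QE DE
  simp only [LinearMap.add_apply, LinearMap.smul_apply, LinearMap.sum_apply,
    Module.End.mul_apply, pdE_apply]
  have key : ∀ (e : Fin 2 → Idx) (a b : Fin 2),
      pderiv ((i, e b) : V4) (pderiv ((j, e a) : V4) (x * c))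
        = pderiv ((i, e b) : V4) (pderiv ((j, e a) : V4) x) * c := by
    intro e a b
    rw [pderiv_mul, hcj (e a), mul_zero, add_zero, pderiv_mul, hci (e b), mul_zero, add_zero]
  simp only [key]
  have hpull : ∀ (T : Fin 2 → Fin 2 → MvPolynomial V4 ℂ),
      (∑ a : Fin 2, ∑ b : Fin 2, eps a b • (T a b * c))
        = (∑ a : Fin 2, ∑ b : Fin 2, eps a b • T a b) * c := by
    intro T
    rw [Finset.sum_mul]
    refine Finset.sum_congr rfl fun a _ => ?_
    rw [Finset.sum_mul]
    exact Finset.sum_congr rfl fun b _ => (smul_mul_assoc _ _ _).symm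
  rw [hpull (fun a b => pderiv ((i, Sum.inl b) : V4) (pderiv ((j, Sum.inl a) : V4) x)),
      hpull (fun a b => pderiv ((i, Sum.inr b) : V4) (pderiv ((j, Sum.inr a) : V4) x)),
      add_mul, smul_mul_assoc]

lemma QE_pow_mul_const (Λ : ℂ) (i j : Fin 4) (c : MvPolynomial V4 ℂ)
    (hci : ∀ v : Idx, pderiv ((i, v) : V4) c = 0)
    (hcj : ∀ v : Idx, pderiv ((j, v) : V4) c = 0) (k : ℕ) (x : MvPolynomial V4 ℂ) :
    ((QE Λ i j) ^ k) (x * c) = ((QE Λ i j) ^ k) x * c := by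
  induction k generalizing x with
  | zero => simp
  | succ m ih =>
      rw [pow_succ, Module.End.mul_apply, Module.End.mul_apply,
        QE_mul_const Λ i j c hci hcj x, ih]

lemma Sexp_QE_mul_const (Λ : ℂ) (i j : Fin 4) (c : MvPolynomial V4 ℂ)
    (hci : ∀ v : Idx, pderiv ((i, v) : V4) c = 0)
    (hcj : ∀ v : Idx, pderiv ((j, v) : V4) c = 0) (N : ℕ) (x : MvPolynomial V4 ℂ) :
    (Sexp N (QE Λ i j) x) * c = Sexp N (QE Λ i j) (x * c) := by
  rw [Sexp_apply, Sexp_apply, Finset.sum_mul]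
  refine Finset.sum_congr rfl fun k _ => ?_
  rw [smul_mul_assoc, QE_pow_mul_const Λ i j c hci hcj k x]

lemma WLe_Em_deg (w : V4 → ℕ) (i : Fin 4) (f : MvPolynomial Idx ℂ)
    (hw : ∀ v : Idx, w (i, v) ≤ 1) : WLe w f.totalDegree (Em i f) :=
  WLe_slot w i hw f

lemma starP_assoc' (Λ : ℂ) (f g h : MvPolynomial Idx ℂ) :
    starP Λ (starP Λ f g) h = starP Λ f (starP Λ g h) := by
  set df := f.totalDegree with hdf
  set dg := g.totalDegree with hdg
  set dh := h.totalDegree with hdh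
  set K := df + dg + dh + 1 with hK
  have hfg := starP_totalDegree Λ f g
  have hgh := starP_totalDegree Λ g h
  -- weights
  have hAuxle : ∀ (i : Fin 4) (v : Idx), wAux (0 : Fin 4) (i, v) ≤ 1 := by
    intro i v; unfold wAux; split <;> omega
  -- LHS ------------------------------------------------------------------
  set u := Sexp K (QE Λ (1 : Fin 4) 3) (Em 1 f * Em 3 g) with hu
  have L2 : starP Λ f g = rename Prod.snd u :=
    bridge4_slots Λ f g 1 3 (Equiv.swap 2 3) (by decide) (by decide) (N := K) (by omega)
  have hu13 : WLe (wIn ({1, 3} : Finset (Fin 4))) 0 u := by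
    refine Keeps.Sexp (Keeps_QE _ Λ 1 3) _ ?_
    have := WLe_mul (WLe_Em_zero {1, 3} 1 (by decide) f) (WLe_Em_zero {1, 3} 3 (by decide) g)
    simpa using this
  have L3 : Em 1 (rename Prod.snd u) = rename (fun x : V4 => ((mu13 x.1, x.2) : V4)) u :=
    Em_collapse 1 {1, 3} mu13 (by decide) u hu13
  have L4 : Em 1 (starP Λ f g) * Em 2 h
      = rename (fun x : V4 => ((mu13 x.1, x.2) : V4)) (u * Em 2 h) := by
    rw [L2, L3, map_mul, Em_slotmap]
    have : mu13 2 = 2 := by decide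
    rw [this]
  set w := Em 1 f * Em 3 g * Em 2 h with hw
  have L6 : u * Em 2 h = Sexp K (QE Λ (1 : Fin 4) 3) w := by
    rw [hu, hw]
    exact Sexp_QE_mul_const Λ 1 3 (Em 2 h)
      (fun v => pderiv_Em_ne (by decide) v h) (fun v => pderiv_Em_ne (by decide) v h) K _
  have hwAux : WLe (wAux (0 : Fin 4)) (df + dg + dh) w := by
    rw [hw]
    exact WLe_mul (WLe_mul (WLe_Em_deg _ 1 f (hAuxle 1)) (WLe_Em_deg _ 3 g (hAuxle 3)))
      (WLe_Em_deg _ 2 h (hAuxle 2))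
  have L7 : Sexp K (QE Λ (1 : Fin 4) 2 + QE Λ 3 2) (Sexp K (QE Λ (1 : Fin 4) 3) w)
      = Sexp K ((QE Λ (1 : Fin 4) 2 + QE Λ 3 2) + QE Λ 1 3) w := by
    refine (Sexp_add_apply ?_ K w ?_).symm
    · exact Commute.add_left (Commute_QE Λ Λ 1 2 1 3) (Commute_QE Λ Λ 3 2 1 3)
    · intro i j hij
      refine Reduces.mixed_zero
        (Reduces.add (Reduces_QE Λ (by decide)) (Reduces_QE Λ (by decide)))
        (Reduces_QE Λ (by decide)) hwAux ?_
      omega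
  have LHS : starP Λ (starP Λ f g) h
      = rename Prod.snd (Sexp K ((QE Λ (1 : Fin 4) 2 + QE Λ 3 2) + QE Λ 1 3) w) := by
    rw [bridge4 Λ (starP Λ f g) h (N := K) (by omega), L4]
    have hconj := Sexp_comp_conj (QE_comp_mu13 Λ) K (u * Em 2 h)
    rw [← rnL_apply (fun x : V4 => ((mu13 x.1, x.2) : V4)) (u * Em 2 h)]
    rw [hconj, rnL_apply, snd_rename_slotmap, L6, L7]
  -- RHS ------------------------------------------------------------------
  set u' := Sexp K (QE Λ (2 : Fin 4) 3) (Em 2 g * Em 3 h) with hu'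
  have R2 : starP Λ g h = rename Prod.snd u' :=
    bridge4_slots Λ g h 2 3 (Equiv.swap 1 2 * Equiv.swap 2 3) (by decide) (by decide) (N := K) (by omega)
  have hu23 : WLe (wIn ({2, 3} : Finset (Fin 4))) 0 u' := by
    refine Keeps.Sexp (Keeps_QE _ Λ 2 3) _ ?_
    have := WLe_mul (WLe_Em_zero {2, 3} 2 (by decide) g) (WLe_Em_zero {2, 3} 3 (by decide) h)
    simpa using this
  have R3 : Em 2 (rename Prod.snd u') = rename (fun x : V4 => ((mu23 x.1, x.2) : V4)) u' :=
    Em_collapse 2 {2, 3} mu23 (by decide) u' hu23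
  have R4 : Em 1 f * Em 2 (starP Λ g h)
      = rename (fun x : V4 => ((mu23 x.1, x.2) : V4)) (Em 1 f * u') := by
    rw [R2, R3, map_mul, Em_slotmap]
    have : mu23 1 = 1 := by decide
    rw [this]
  set w' := Em 2 g * Em 3 h * Em 1 f with hw'
  have R6 : Em 1 f * u' = Sexp K (QE Λ (2 : Fin 4) 3) w' := by
    rw [hu', hw', mul_comm]
    exact Sexp_QE_mul_const Λ 2 3 (Em 1 f)
      (fun v => pderiv_Em_ne (by decide) v f) (fun v => pderiv_Em_ne (by decide) v f) K _
  have hw'Aux : WLe (wAux (0 : Fin 4)) (df + dg + dh) w' := by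
    rw [hw']
    have base := WLe_mul (WLe_mul (WLe_Em_deg (wAux (0 : Fin 4)) 2 g (hAuxle 2))
      (WLe_Em_deg (wAux (0 : Fin 4)) 3 h (hAuxle 3)))
      (WLe_Em_deg (wAux (0 : Fin 4)) 1 f (hAuxle 1))
    exact WLe_mono (by omega) base
  have R7 : Sexp K (QE Λ (1 : Fin 4) 2 + QE Λ 1 3) (Sexp K (QE Λ (2 : Fin 4) 3) w')
      = Sexp K ((QE Λ (1 : Fin 4) 2 + QE Λ 1 3) + QE Λ 2 3) w' := by
    refine (Sexp_add_apply ?_ K w' ?_).symm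
    · exact Commute.add_left (Commute_QE Λ Λ 1 2 2 3) (Commute_QE Λ Λ 1 3 2 3)
    · intro i j hij
      refine Reduces.mixed_zero
        (Reduces.add (Reduces_QE Λ (by decide)) (Reduces_QE Λ (by decide)))
        (Reduces_QE Λ (by decide)) hw'Aux ?_
      omega
  have RHS : starP Λ f (starP Λ g h)
      = rename Prod.snd (Sexp K ((QE Λ (1 : Fin 4) 2 + QE Λ 1 3) + QE Λ 2 3) w') := by
    rw [bridge4 Λ f (starP Λ g h) (N := K) (by omega), R4]
    have hconj := Sexp_comp_conj (QE_comp_mu23 Λ) K (Em 1 f * u')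
    rw [← rnL_apply (fun x : V4 => ((mu23 x.1, x.2) : V4)) (Em 1 f * u')]
    rw [hconj, rnL_apply, snd_rename_slotmap, R6, R7]
  -- final comparison via the swap (2 3) ------------------------------------
  set π : Equiv.Perm (Fin 4) := Equiv.swap 2 3 with hπ
  have e1 : π 1 = 1 := by rw [hπ]; decide
  have e2 : π 2 = 3 := by rw [hπ]; decide
  have e3 : π 3 = 2 := by rw [hπ]; decide
  have F1 : rename (fun x : V4 => ((π x.1, x.2) : V4)) w' = w := by
    rw [hw', hw, map_mul, map_mul, Em_slotmap, Em_slotmap, Em_slotmap, e1, e2, e3]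
    ring
  have c12 := QE_comp_perm π Λ 1 2
  rw [e1, e2] at c12
  have c13 := QE_comp_perm π Λ 1 3
  rw [e1, e3] at c13
  have c23 := QE_comp_perm π Λ 2 3
  rw [e2, e3] at c23
  have F3 : ((QE Λ (1 : Fin 4) 2 + QE Λ 3 2) + QE Λ 1 3).comp
        (rnL (fun x : V4 => ((π x.1, x.2) : V4)))
      = (rnL (fun x : V4 => ((π x.1, x.2) : V4))).comp
        ((QE Λ (1 : Fin 4) 2 + QE Λ 1 3) + QE Λ 2 3) := by
    have hops : (QE Λ (1 : Fin 4) 2 + QE Λ 3 2) + QE Λ 1 3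
        = (QE Λ (1 : Fin 4) 3 + QE Λ 1 2) + QE Λ 3 2 := by abel
    rw [hops, LinearMap.add_comp, LinearMap.add_comp, c12, c13, c23,
      LinearMap.comp_add, LinearMap.comp_add]
  have F4 : Sexp K ((QE Λ (1 : Fin 4) 2 + QE Λ 3 2) + QE Λ 1 3) w
      = rnL (fun x : V4 => ((π x.1, x.2) : V4))
          (Sexp K ((QE Λ (1 : Fin 4) 2 + QE Λ 1 3) + QE Λ 2 3) w') := by
    rw [← F1]
    exact Sexp_comp_conj F3 K w'
  rw [LHS, RHS, F4, rnL_apply, snd_rename_slotmap]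

end Assoc

end StarAssoc

/-- The star product is associative. -/
theorem starP_assoc (Λ : ℂ) (f g h : MvPolynomial Idx ℂ) :
    starP Λ (starP Λ f g) h = starP Λ f (starP Λ g h) := by
  exact StarAssoc.starP_assoc' Λ f g h
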